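/- Let $x$ be a random variable with $l(t) := \mathbb{E}[x^2 \mathbf{1}_{\{|x| \le t\}}]$ slowly varying at infinity and $\mathbb{E} x^2 = \infty$. Then $\mathbb{P}(|x| > t) = o(l(t)/t^2)$ as $t \to \infty$, i.e. $t^2 \mathbb{P}(|x| > t)/l(t) \to 0$. -/

import Mathlib

open MeasureTheory Filter

theorem stmt12 {Ω : Type*} [MeasurableSpace Ω] (P : Measure Ω) [IsProbabilityMeasure P]
    (x : Ω → ℝ) (hx : Measurable x)
    (l : ℝ → ℝ)
    (hl : ∀ t : ℝ, l t = ∫ ω, Set.indicator {ω | |x ω| ≤ t} (fun ω => (x ω) ^ 2) ω ∂P)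
    (hsv : ∀ lam > (0 : ℝ), Tendsto (fun t => l (lam * t) / l t) atTop (nhds 1))
    (hinf : ¬ Integrable (fun ω => (x ω) ^ 2) P) :
    Tendsto (fun t : ℝ => t ^ 2 * (P {ω | t < |x ω|}).toReal / l t) atTop (nhds 0) := by
  classical
  set S : ℝ → Set Ω := fun t => {ω | |x ω| ≤ t} with hS_def
  have hS : ∀ t, MeasurableSet (S t) := fun t => measurableSet_le hx.abs measurable_const
  have hmeas2 : Measurable fun ω => x ω ^ 2 := hx.pow_const 2
  have hIntOn : ∀ t : ℝ, IntegrableOn (fun ω => x ω ^ 2) (S t) P := by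
    intro t
    refine Integrable.mono' (integrable_const (t ^ 2)) hmeas2.aestronglyMeasurable.restrict ?_
    refine (ae_restrict_iff' (hS t)).2 (Eventually.of_forall fun ω hω => ?_)
    have h1 : |x ω| ≤ t := hω
    calc ‖x ω ^ 2‖ = |x ω| ^ 2 := by
          rw [Real.norm_eq_abs, abs_of_nonneg (sq_nonneg _), sq_abs]
      _ ≤ t ^ 2 := by
          exact pow_le_pow_left₀ (abs_nonneg _) h1 2
  have hl' : ∀ t, l t = ∫ ω in S t, x ω ^ 2 ∂P := by
    intro t; rw [hl t, integral_indicator (hS t)]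
  have hmono : Monotone l := by
    intro a b hab
    rw [hl' a, hl' b]
    refine setIntegral_mono_set (hIntOn b) (Eventually.of_forall fun ω => sq_nonneg _) ?_
    exact HasSubset.Subset.eventuallyLE fun ω h => le_trans h hab
  have hl0 : ∀ t, 0 ≤ l t := fun t => by
    rw [hl' t]; exact setIntegral_nonneg (hS t) fun ω _ => sq_nonneg _
  -- positivity of l somewhere
  have hpos : ∃ t0 : ℝ, 0 < l t0 := by
    by_contra h
    push_neg at h
    have hz : ∀ n : ℕ, (fun ω => x ω ^ 2) =ᵐ[P.restrict (S (n : ℝ))] 0 := by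
      intro n
      have h0 : l n = 0 := le_antisymm (h n) (hl0 n)
      rw [hl' n] at h0
      exact (integral_eq_zero_iff_of_nonneg_ae
        (Eventually.of_forall fun ω => sq_nonneg _) (hIntOn n)).1 h0
    have hz2 : ∀ᵐ ω ∂P, ∀ n : ℕ, ω ∈ S (n : ℝ) → x ω ^ 2 = 0 := by
      rw [ae_all_iff]
      exact fun n => ae_imp_of_ae_restrict (hz n)
    have hz3 : (fun ω => x ω ^ 2) =ᵐ[P] 0 := by
      filter_upwards [hz2] with ω hω
      obtain ⟨n, hn⟩ := exists_nat_ge (|x ω|)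
      exact hω n hn
    exact hinf ((integrable_zero Ω ℝ P).congr hz3.symm)
  obtain ⟨t0, ht0⟩ := hpos
  have hlpos : ∀ t, t0 ≤ t → 0 < l t := fun t ht => lt_of_lt_of_le ht0 (hmono ht)
  -- Potter bound threshold
  obtain ⟨T1, hT1⟩ := eventually_atTop.1 ((hsv 2 two_pos).eventually_lt_const one_lt_two)
  set T : ℝ := max T1 (max t0 1) with hT_def
  have hTt0 : t0 ≤ T := le_trans (le_max_left _ _) (le_max_right _ _)
  have hT1' : (1 : ℝ) ≤ T := le_trans (le_max_right _ _) (le_max_right _ _)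
  have hPotter : ∀ s, T ≤ s → l (2 * s) ≤ 2 * l s := by
    intro s hs
    have hls : 0 < l s := hlpos s (le_trans hTt0 hs)
    have := hT1 s (le_trans (le_max_left _ _) hs)
    exact le_of_lt ((div_lt_iff₀ hls).1 this)
  have hPow : ∀ t, T ≤ t → ∀ k : ℕ, l (2 ^ k * t) ≤ 2 ^ k * l t := by
    intro t ht k
    have htpos : (0 : ℝ) < t := lt_of_lt_of_le one_pos (le_trans hT1' ht)
    induction k with
    | zero => simp
    | succ k ih =>
      have hsk : T ≤ 2 ^ k * t := by
        have hk : (1:ℝ) ≤ 2 ^ k := one_le_pow₀ one_le_two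
        nlinarith
      have h1 : l (2 ^ (k + 1) * t) = l (2 * (2 ^ k * t)) := by ring_nf
      have h2 := hPotter _ hsk
      rw [h1]
      calc l (2 * (2 ^ k * t)) ≤ 2 * l (2 ^ k * t) := h2
        _ ≤ 2 * (2 ^ k * l t) := by linarith
        _ = 2 ^ (k + 1) * l t := by ring
  -- core annulus bound
  have hcore : ∀ s s' : ℝ, 0 ≤ s → s ≤ s' →
      s ^ 2 * (P (S s' \ S s)).toReal ≤ l s' - l s := by
    intro s s' h0 hss
    have hmA : MeasurableSet (S s' \ S s) := (hS s').diff (hS s)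
    have hdiff : ∫ ω in S s' \ S s, x ω ^ 2 ∂P = l s' - l s := by
      rw [hl' s', hl' s]
      exact integral_diff (hS s) (hIntOn s') (fun ω h => le_trans h hss)
    rw [← hdiff]
    refine setIntegral_ge_of_const_le_real hmA (measure_ne_top P _) (fun ω hω => ?_)
      ((hIntOn s').mono_set Set.diff_subset)
    have h1 : s < |x ω| := lt_of_not_ge hω.2
    calc s ^ 2 ≤ |x ω| ^ 2 := pow_le_pow_left₀ h0 (le_of_lt h1) 2
      _ = x ω ^ 2 := sq_abs _
  -- splitting
  have hmeaslt : ∀ s : ℝ, MeasurableSet {ω | s < |x ω|} :=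
    fun s => measurableSet_lt measurable_const hx.abs
  have hsplit : ∀ s s' : ℝ, s ≤ s' → (P {ω | s < |x ω|}).toReal ≤
      (P (S s' \ S s)).toReal + (P {ω | s' < |x ω|}).toReal := by
    intro s s' hss
    have hsub : {ω | s < |x ω|} ⊆ (S s' \ S s) ∪ {ω | s' < |x ω|} := by
      intro ω hω
      have hω' : s < |x ω| := hω
      by_cases h : |x ω| ≤ s'
      · exact Or.inl ⟨h, fun hh => absurd (show |x ω| ≤ s from hh) (not_le.2 hω')⟩
      · exact Or.inr (show s' < |x ω| from not_le.1 h)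
    calc (P {ω | s < |x ω|}).toReal
        ≤ (P ((S s' \ S s) ∪ {ω | s' < |x ω|})).toReal :=
          ENNReal.toReal_mono (measure_ne_top P _) (measure_mono hsub)
      _ ≤ (P (S s' \ S s) + P {ω | s' < |x ω|}).toReal :=
          ENNReal.toReal_mono (by
            exact ENNReal.add_ne_top.2 ⟨measure_ne_top P _, measure_ne_top P _⟩)
            (measure_union_le _ _)
      _ = (P (S s' \ S s)).toReal + (P {ω | s' < |x ω|}).toReal :=
          ENNReal.toReal_add (measure_ne_top P _) (measure_ne_top P _)
  -- main per-t bound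
  have hmain : ∀ m : ℕ, ∀ t : ℝ, T ≤ t →
      t ^ 2 * (P {ω | t < |x ω|}).toReal ≤ (l (2 ^ m * t) - l t) + 4 * l t / 2 ^ m := by
    intro m t ht
    have htpos : (0 : ℝ) < t := lt_of_lt_of_le one_pos (le_trans hT1' ht)
    set g : ℕ → ℝ := fun n => t ^ 2 * (P {ω | 2 ^ n * t < |x ω|}).toReal with hg_def
    have hgnonneg : ∀ n, 0 ≤ g n := fun n =>
      mul_nonneg (sq_nonneg _) ENNReal.toReal_nonneg
    have hgstep : ∀ k : ℕ,
        g k ≤ (l (2 ^ (k + 1) * t) - l (2 ^ k * t)) / 4 ^ k + g (k + 1) := by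
      intro k
      have hss : (2 : ℝ) ^ k * t ≤ 2 ^ (k + 1) * t := by
        have : (2:ℝ) ^ k ≤ 2 ^ (k+1) := by
          exact pow_le_pow_right₀ one_le_two (Nat.le_succ k)
        nlinarith
      have h1 := hsplit (2 ^ k * t) (2 ^ (k + 1) * t) hss
      have h2 := hcore (2 ^ k * t) (2 ^ (k + 1) * t)
        (by positivity) hss
      have h4 : ((2:ℝ) ^ k * t) ^ 2 = 4 ^ k * t ^ 2 := by
        have : ((2:ℝ) ^ k) ^ 2 = 4 ^ k := by
          rw [← pow_mul, show (4:ℝ) = 2 ^ 2 by norm_num, ← pow_mul, Nat.mul_comm]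
        rw [mul_pow, this]
      have h4pos : (0:ℝ) < 4 ^ k := by positivity
      have h5 : t ^ 2 * (P (S (2 ^ (k+1) * t) \ S (2 ^ k * t))).toReal ≤
          (l (2 ^ (k + 1) * t) - l (2 ^ k * t)) / 4 ^ k := by
        rw [le_div_iff₀ h4pos]
        nlinarith [ENNReal.toReal_nonneg (a := P (S (2 ^ (k+1) * t) \ S (2 ^ k * t)))]
      calc g k ≤ t ^ 2 * ((P (S (2 ^ (k+1) * t) \ S (2 ^ k * t))).toReal
            + (P {ω | 2 ^ (k+1) * t < |x ω|}).toReal) := by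
            exact mul_le_mul_of_nonneg_left h1 (sq_nonneg _)
        _ = t ^ 2 * (P (S (2 ^ (k+1) * t) \ S (2 ^ k * t))).toReal + g (k+1) := by
            rw [hg_def]; ring
        _ ≤ (l (2 ^ (k + 1) * t) - l (2 ^ k * t)) / 4 ^ k + g (k + 1) := by linarith
    have hkey : ∀ k n : ℕ, g k ≤ g (k + n) +
        ∑ j ∈ Finset.range n, (l (2 ^ (k + j + 1) * t) - l (2 ^ (k + j) * t)) / 4 ^ (k + j) := by
      intro k n
      induction n with
      | zero => simp
      | succ n ih =>
        rw [Finset.sum_range_succ]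
        have := hgstep (k + n)
        have h7 : k + (n+1) = (k + n) + 1 := by ring
        rw [h7]
        linarith
    -- tendsto of g
    have hglim : Tendsto g atTop (nhds 0) := by
      have hanti : Antitone fun n : ℕ => {ω | 2 ^ n * t < |x ω|} := by
        intro a b hab ω hω
        have : (2:ℝ) ^ a * t ≤ 2 ^ b * t := by
          have := pow_le_pow_right₀ (a := (2:ℝ)) one_le_two hab
          nlinarith
        exact lt_of_le_of_lt this hω
      have hint : (⋂ n : ℕ, {ω | 2 ^ n * t < |x ω|}) = ∅ := by
        ext ω
        simp only [Set.mem_iInter, Set.mem_setOf_eq, Set.mem_empty_iff_false, iff_false,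
          not_forall, not_lt]
        obtain ⟨n, hn⟩ := pow_unbounded_of_one_lt (|x ω| / t) (y := (2:ℝ)) one_lt_two
        exact ⟨n, le_of_lt (by rwa [div_lt_iff₀ htpos] at hn)⟩
      have h8 := tendsto_measure_iInter_atTop
        (fun n => (hmeaslt ((2:ℝ) ^ n * t)).nullMeasurableSet) hanti
        ⟨0, measure_ne_top P _⟩
      rw [hint, measure_empty] at h8
      have h9 : Tendsto (fun n : ℕ => (P {ω | 2 ^ n * t < |x ω|}).toReal) atTop (nhds 0) := by
        have := (ENNReal.tendsto_toReal (a := 0) (by simp)).comp h8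
        simpa [Function.comp_def] using this
      have := h9.const_mul (t ^ 2)
      simpa using this
    -- bound on tail g m
    have hgm : g m ≤ 4 * l t / 2 ^ m := by
      have hb : ∀ n : ℕ, g m ≤ g (m + n) + 4 * l t / 2 ^ m := by
        intro n
        refine le_trans (hkey m n) ?_
        have hsum : ∑ j ∈ Finset.range n,
            (l (2 ^ (m + j + 1) * t) - l (2 ^ (m + j) * t)) / 4 ^ (m + j)
            ≤ 4 * l t / 2 ^ m := by
          have hterm : ∀ j ∈ Finset.range n,
              (l (2 ^ (m + j + 1) * t) - l (2 ^ (m + j) * t)) / 4 ^ (m + j)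
              ≤ (2 * l t / 2 ^ m) * (1/2) ^ j := by
            intro j _
            have h1 : l (2 ^ (m + j + 1) * t) ≤ 2 ^ (m + j + 1) * l t := hPow t ht _
            have h2 : 0 ≤ l (2 ^ (m + j) * t) := hl0 _
            have h3 : ((4:ℝ)) ^ (m + j) = 2 ^ (m+j) * 2 ^ (m+j) := by
              rw [show (4:ℝ) = 2*2 by norm_num, mul_pow]
            have h4 : (0:ℝ) < 2 ^ (m+j) := by positivity
            rw [div_le_iff₀ (by positivity)]
            have h5 : (2:ℝ) ^ (m + j + 1) = 2 * (2 ^ m * 2 ^ j) := by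
              rw [pow_succ, pow_add]; ring
            have h6 : (2 * l t / 2 ^ m) * (1/2) ^ j * 4 ^ (m+j)
                = 2 ^ (m + j + 1) * l t := by
              rw [h3, h5, one_div, inv_pow]
              field_simp
              ring
            rw [h6]
            linarith
          calc ∑ j ∈ Finset.range n,
              (l (2 ^ (m + j + 1) * t) - l (2 ^ (m + j) * t)) / 4 ^ (m + j)
              ≤ ∑ j ∈ Finset.range n, (2 * l t / 2 ^ m) * (1/2) ^ j :=
                Finset.sum_le_sum hterm
            _ = (2 * l t / 2 ^ m) * ∑ j ∈ Finset.range n, (1/2 : ℝ) ^ j := by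
                rw [Finset.mul_sum]
            _ ≤ (2 * l t / 2 ^ m) * 2 := by
                refine mul_le_mul_of_nonneg_left (sum_geometric_two_le n) ?_
                have := hl0 t
                positivity
            _ = 4 * l t / 2 ^ m := by ring
        linarith
      have hlim2 : Tendsto (fun n : ℕ => g (m + n) + 4 * l t / 2 ^ m) atTop
          (nhds (0 + 4 * l t / 2 ^ m)) := by
        exact Tendsto.add_const _ (hglim.comp (tendsto_add_atTop_nat m |>.comp tendsto_id) |>.congr (fun n => by simp [Nat.add_comm]))
      rw [zero_add] at hlim2
      exact ge_of_tendsto' hlim2 hb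
    -- head bound
    have hg0 : g 0 ≤ g m + (l (2 ^ m * t) - l t) := by
      have := hkey 0 m
      have hsum2 : ∑ j ∈ Finset.range m,
          (l (2 ^ (0 + j + 1) * t) - l (2 ^ (0 + j) * t)) / 4 ^ (0 + j)
          ≤ l (2 ^ m * t) - l t := by
        have h1 : ∀ j ∈ Finset.range m,
            (l (2 ^ (0 + j + 1) * t) - l (2 ^ (0 + j) * t)) / 4 ^ (0 + j)
            ≤ l (2 ^ (j + 1) * t) - l (2 ^ j * t) := by
          intro j _
          simp only [Nat.zero_add]
          refine div_le_self ?_ (one_le_pow₀ (by norm_num))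
          have : (2:ℝ) ^ j * t ≤ 2 ^ (j+1) * t := by
            have : (2:ℝ) ^ j ≤ 2 ^ (j+1) := pow_le_pow_right₀ one_le_two (Nat.le_succ j)
            nlinarith
          linarith [hmono this]
        calc ∑ j ∈ Finset.range m,
            (l (2 ^ (0 + j + 1) * t) - l (2 ^ (0 + j) * t)) / 4 ^ (0 + j)
            ≤ ∑ j ∈ Finset.range m, (l (2 ^ (j + 1) * t) - l (2 ^ j * t)) :=
              Finset.sum_le_sum h1
          _ = l (2 ^ m * t) - l (2 ^ 0 * t) :=
              Finset.sum_range_sub (fun i => l (2 ^ i * t)) m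
          _ = l (2 ^ m * t) - l t := by norm_num
      have h0m : (0:ℕ) + m = m := by ring
      rw [h0m] at this
      linarith
    have hg0' : t ^ 2 * (P {ω | t < |x ω|}).toReal = g 0 := by
      rw [hg_def]; norm_num
    rw [hg0']
    linarith
  -- final assembly
  rw [Metric.tendsto_atTop]
  intro ε hε
  obtain ⟨m, hm⟩ := pow_unbounded_of_one_lt (8 / ε) (y := (2:ℝ)) one_lt_two
  have hm2 : 4 / (2:ℝ) ^ m < ε / 2 := by
    rw [div_lt_iff₀ (by positivity)]
    rw [div_lt_iff₀ hε] at hm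
    nlinarith [pow_pos (show (0:ℝ) < 2 by norm_num) m]
  have hev := (hsv (2 ^ m) (by positivity)).eventually_lt_const
    (show (1:ℝ) < 1 + ε / 2 by linarith)
  obtain ⟨T2, hT2⟩ := eventually_atTop.1 hev
  refine ⟨max T T2, fun t ht => ?_⟩
  have htT : T ≤ t := le_trans (le_max_left _ _) ht
  have htT2 : T2 ≤ t := le_trans (le_max_right _ _) ht
  have hlt : 0 < l t := hlpos t (le_trans hTt0 htT)
  have h1 := hmain m t htT
  have h2 := hT2 t htT2
  have hfnonneg : 0 ≤ t ^ 2 * (P {ω | t < |x ω|}).toReal / l t :=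
    div_nonneg (mul_nonneg (sq_nonneg _) ENNReal.toReal_nonneg) (le_of_lt hlt)
  rw [Real.dist_eq, sub_zero, abs_of_nonneg hfnonneg]
  have h3 : t ^ 2 * (P {ω | t < |x ω|}).toReal / l t ≤
      ((l (2 ^ m * t) - l t) + 4 * l t / 2 ^ m) / l t := by
    gcongr
  have h4 : ((l (2 ^ m * t) - l t) + 4 * l t / 2 ^ m) / l t
      = l (2 ^ m * t) / l t - 1 + 4 / 2 ^ m := by
    rw [div_eq_iff (ne_of_gt hlt)]
    field_simp
  rw [h4] at h3
  linarith
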